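/- Let f : ℝⁿ → ℝ be differentiable and μ-strongly convex with 0 < μ, and suppose ∇f is Lipschitz continuous with constant L where μ ≤ L. Let Q be the nonnegative orthant and let x* ∈ Q satisfy f(x*) ≤ f(x) for all x ∈ Q. Define the projected gradient iterates x_{k+1} = P(x_k − (1/L)∇f(x_k)) starting from any x_0 ∈ Q. Then for every k ≥ 0, ‖x_k − x*‖² ≤ (1 − μ/L)^k · ‖x_0 − x*‖². -/

import Mathlib

open scoped RealInnerProductSpace

section aux
variable {E : Type*} [NormedAddCommGroup E] [InnerProductSpace ℝ E] [CompleteSpace E]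

lemma pg_line_deriv (f : E → ℝ) (f' : E → E) (hgrad : ∀ x, HasGradientAt f (f' x) x)
    (x d : E) (t : ℝ) :
    HasDerivAt (fun s : ℝ => f (x + s • d)) ⟪f' (x + t • d), d⟫ t := by
  have h1 : HasDerivAt (fun s : ℝ => x + s • d) d t := by
    simpa using ((hasDerivAt_id t).smul_const d).const_add x
  have h2 := (hgrad (x + t • d)).hasFDerivAt
  have h3 := h2.comp_hasDerivAt t h1
  simp only [InnerProductSpace.toDual_apply_apply] at h3
  exact h3

lemma pg_descent (f : E → ℝ) (f' : E → E) (hgrad : ∀ x, HasGradientAt f (f' x) x)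
    (L : ℝ) (hlip : ∀ x y : E, ‖f' x - f' y‖ ≤ L * ‖x - y‖) (x y : E) :
    f y ≤ f x + ⟪f' x, y - x⟫ + L / 2 * ‖y - x‖ ^ 2 := by
  set d := y - x with hd
  set ψ : ℝ → ℝ := fun t => f (x + t • d) - t * ⟪f' x, d⟫ - L / 2 * t ^ 2 * ‖d‖ ^ 2 with hψ
  have hder : ∀ t : ℝ, HasDerivAt ψ
      (⟪f' (x + t • d), d⟫ - ⟪f' x, d⟫ - L * t * ‖d‖ ^ 2) t := by
    intro t
    have h1 := pg_line_deriv f f' hgrad x d t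
    have h2 : HasDerivAt (fun t : ℝ => t * ⟪f' x, d⟫) ⟪f' x, d⟫ t := by
      simpa using (hasDerivAt_id t).mul_const ⟪f' x, d⟫
    have h3 : HasDerivAt (fun t : ℝ => L / 2 * t ^ 2 * ‖d‖ ^ 2) (L * t * ‖d‖ ^ 2) t := by
      have h4 := ((hasDerivAt_pow 2 t).const_mul (L / 2)).mul_const (‖d‖ ^ 2)
      exact h4.congr_deriv (by rw [show (2:ℕ) - 1 = 1 from rfl, pow_one]; push_cast; ring)
    exact (h1.sub h2).sub h3
  have hanti : AntitoneOn ψ (Set.Icc 0 1) := by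
    apply antitoneOn_of_deriv_nonpos (convex_Icc 0 1)
    · exact fun t _ => (hder t).continuousAt.continuousWithinAt
    · exact fun t _ => (hder t).differentiableAt.differentiableWithinAt
    · intro t ht
      rw [interior_Icc, Set.mem_Ioo] at ht
      rw [(hder t).deriv]
      have hb : ⟪f' (x + t • d), d⟫ - ⟪f' x, d⟫ ≤ L * t * ‖d‖ ^ 2 := by
        have e1 : ⟪f' (x + t • d), d⟫ - ⟪f' x, d⟫ = ⟪f' (x + t • d) - f' x, d⟫ := by
          rw [inner_sub_left]
        rw [e1]
        calc ⟪f' (x + t • d) - f' x, d⟫ ≤ ‖f' (x + t • d) - f' x‖ * ‖d‖ :=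
              real_inner_le_norm _ _
          _ ≤ (L * ‖(x + t • d) - x‖) * ‖d‖ :=
              mul_le_mul_of_nonneg_right (hlip _ _) (norm_nonneg _)
          _ = L * t * ‖d‖ ^ 2 := by
              have : (x + t • d) - x = t • d := by abel
              rw [this, norm_smul, Real.norm_eq_abs, abs_of_pos ht.1]
              ring
      linarith
  have h01 := hanti (Set.mem_Icc.mpr ⟨le_refl 0, zero_le_one⟩)
    (Set.mem_Icc.mpr ⟨zero_le_one, le_refl 1⟩) zero_le_one
  have e0 : ψ 0 = f x := by simp [hψ]
  have e1 : ψ 1 = f y - ⟪f' x, d⟫ - L / 2 * ‖d‖ ^ 2 := by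
    simp only [hψ, one_pow, one_smul, one_mul, mul_one]
    rw [show x + d = y from by rw [hd]; abel]
  rw [e0, e1] at h01
  linarith

lemma pg_cocoercive (f : E → ℝ) (f' : E → E) (L : ℝ) (hL : 0 < L)
    (hconv : ∀ a b : E, f a + ⟪f' a, b - a⟫ ≤ f b)
    (hdesc : ∀ a b : E, f b ≤ f a + ⟪f' a, b - a⟫ + L / 2 * ‖b - a‖ ^ 2)
    (a b : E) :
    (1 / L) * ‖f' a - f' b‖ ^ 2 ≤ ⟪f' a - f' b, a - b⟫ := by
  have key : ∀ u v : E, f u + ⟪f' u, v - u⟫ + 1 / (2 * L) * ‖f' v - f' u‖ ^ 2 ≤ f v := by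
    intro u v
    set Δ := f' v - f' u with hΔ
    set z := v - (1 / L) • Δ with hz
    have h1 := hconv u z
    have h2 := hdesc v z
    have hz1 : z - v = -((1 / L) • Δ) := by rw [hz]; abel
    have e1 : ⟪f' v - f' u, z - v⟫ = -(1 / L) * ‖Δ‖ ^ 2 := by
      rw [← hΔ, hz1, inner_neg_right, real_inner_smul_right, real_inner_self_eq_norm_sq]
      ring
    have e2 : ‖z - v‖ ^ 2 = (1 / L) ^ 2 * ‖Δ‖ ^ 2 := by
      rw [hz1, norm_neg, norm_smul, Real.norm_eq_abs, abs_of_pos (by positivity)]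
      ring
    have e3 : ⟪f' u, z - u⟫ = ⟪f' u, v - u⟫ + ⟪f' u, z - v⟫ := by
      rw [← inner_add_right]
      congr 1
      abel
    have e4 : ⟪f' v, z - v⟫ = ⟪f' v - f' u, z - v⟫ + ⟪f' u, z - v⟫ := by
      rw [inner_sub_left]; ring
    have e5 : L / 2 * ‖z - v‖ ^ 2 = 1 / (2 * L) * ‖Δ‖ ^ 2 := by
      rw [e2]; field_simp
    rw [e3] at h1
    rw [e4, e1, e5] at h2
    have hrel : -(1 / L) * ‖Δ‖ ^ 2 + 1 / (2 * L) * ‖Δ‖ ^ 2 = -(1 / (2 * L)) * ‖Δ‖ ^ 2 := by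
      field_simp
      ring
    linarith
  have k1 := key a b
  have k2 := key b a
  have n1 : ‖f' b - f' a‖ = ‖f' a - f' b‖ := norm_sub_rev _ _
  rw [n1] at k1
  have i1 : ⟪f' a - f' b, a - b⟫ = -⟪f' a, b - a⟫ - ⟪f' b, a - b⟫ := by
    rw [inner_sub_left, show a - b = -(b - a) from by abel, inner_neg_right, inner_neg_right]
    try ring
  have hLi : 1 / L = 1 / (2 * L) + 1 / (2 * L) := by field_simp; ring
  rw [i1, hLi]
  linarith

end aux
theorem projected_gradient_linear_convergence
    (n : ℕ) (f : EuclideanSpace ℝ (Fin n) → ℝ)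
    (f' : EuclideanSpace ℝ (Fin n) → EuclideanSpace ℝ (Fin n))
    (hgrad : ∀ x, HasGradientAt f (f' x) x)
    (μ L : ℝ) (hμ : 0 < μ) (hμL : μ ≤ L)
    (hsc : ∀ x y : EuclideanSpace ℝ (Fin n),
      f x ≥ f y + ⟪f' y, x - y⟫ + μ / 2 * ‖x - y‖ ^ 2)
    (hlip : ∀ x y : EuclideanSpace ℝ (Fin n), ‖f' x - f' y‖ ≤ L * ‖x - y‖)
    (Q : Set (EuclideanSpace ℝ (Fin n)))
    (hQ : Q = {x : EuclideanSpace ℝ (Fin n) | ∀ i, 0 ≤ x i})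
    (P : EuclideanSpace ℝ (Fin n) → EuclideanSpace ℝ (Fin n))
    (hP : ∀ x i, P x i = max (x i) 0)
    (xstar : EuclideanSpace ℝ (Fin n)) (hxstarQ : xstar ∈ Q)
    (hmin : ∀ x ∈ Q, f xstar ≤ f x)
    (x : ℕ → EuclideanSpace ℝ (Fin n)) (hx0 : x 0 ∈ Q)
    (hiter : ∀ k : ℕ, x (k + 1) = P (x k - (1 / L) • f' (x k))) :
    ∀ k : ℕ, ‖x k - xstar‖ ^ 2 ≤ (1 - μ / L) ^ k * ‖x 0 - xstar‖ ^ 2 := by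
  have hL : 0 < L := lt_of_lt_of_le hμ hμL
  -- convexity
  have hconv : ∀ a b : EuclideanSpace ℝ (Fin n), f a + ⟪f' a, b - a⟫ ≤ f b := by
    intro a b
    have h1 := hsc b a
    have h2 : 0 ≤ μ / 2 * ‖b - a‖ ^ 2 := by positivity
    linarith
  have hdesc := pg_descent f f' hgrad L hlip
  have hco := pg_cocoercive f f' L hL hconv hdesc
  -- strong monotonicity
  have hmono : ∀ a b : EuclideanSpace ℝ (Fin n),
      μ * ‖a - b‖ ^ 2 ≤ ⟪f' a - f' b, a - b⟫ := by
    intro a b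
    have h1 := hsc a b
    have h2 := hsc b a
    have e1 : ⟪f' a - f' b, a - b⟫ = ⟪f' a, a - b⟫ - ⟪f' b, a - b⟫ := inner_sub_left _ _ _
    have e2 : ⟪f' a, b - a⟫ = -⟪f' a, a - b⟫ := by
      rw [show b - a = -(a - b) from by abel, inner_neg_right]
    have e3 : ‖b - a‖ = ‖a - b‖ := norm_sub_rev _ _
    rw [e2, e3] at h2
    linarith
  -- norm squared componentwise
  have hns : ∀ v : EuclideanSpace ℝ (Fin n), ‖v‖ ^ 2 = ∑ i, (v i) ^ 2 := by
    intro v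
    rw [EuclideanSpace.norm_eq, Real.sq_sqrt (by positivity)]
    congr 1
    ext i
    rw [Real.norm_eq_abs, sq_abs]
  have habs : ∀ (v : EuclideanSpace ℝ (Fin n)) i, |v i| ≤ ‖v‖ := by
    intro v i
    have h1 : (v i) ^ 2 ≤ ‖v‖ ^ 2 := by
      rw [hns]
      exact Finset.single_le_sum (f := fun j => (v j) ^ 2) (fun j _ => sq_nonneg _)
        (Finset.mem_univ i)
    calc |v i| = Real.sqrt ((v i) ^ 2) := (Real.sqrt_sq_eq_abs _).symm
      _ ≤ Real.sqrt (‖v‖ ^ 2) := Real.sqrt_le_sqrt h1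
      _ = ‖v‖ := by rw [Real.sqrt_sq (norm_nonneg _)]
  -- nonexpansiveness of P
  have hPn : ∀ a b : EuclideanSpace ℝ (Fin n), ‖P a - P b‖ ^ 2 ≤ ‖a - b‖ ^ 2 := by
    intro a b
    rw [hns, hns]
    apply Finset.sum_le_sum
    intro i _
    have ha : (P a - P b) i = max (a i) 0 - max (b i) 0 := by
      have : (P a - P b) i = P a i - P b i := rfl
      rw [this, hP, hP]
    have hb : (a - b) i = a i - b i := rfl
    rw [ha, hb]
    have h1 : |max (a i) 0 - max (b i) 0| ≤ |a i - b i| := abs_max_sub_max_le_abs _ _ _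
    have h2 := pow_le_pow_left₀ (abs_nonneg _) h1 2
    rwa [sq_abs, sq_abs] at h2
  have hxs : ∀ i, 0 ≤ xstar i := by rw [hQ] at hxstarQ; exact hxstarQ
  -- directional inequality
  have hdir : ∀ (i : Fin n) (t : ℝ), 0 < t →
      ∀ (y : EuclideanSpace ℝ (Fin n)), y ∈ Q → xstar - y = -(t • EuclideanSpace.single i (1 : ℝ)) →
      μ / 2 * t ^ 2 ≤ t * f' y i := by
    intro i t ht y hyQ hxy
    have h1 := hsc xstar y
    have h2 := hmin y hyQ
    have e1 : ⟪f' y, xstar - y⟫ = -(t * f' y i) := by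
      rw [hxy, inner_neg_right, real_inner_smul_right]
      have : ⟪f' y, EuclideanSpace.single i (1 : ℝ)⟫ = f' y i := by
        rw [EuclideanSpace.inner_single_right]
        simp
      rw [this]
    have e2 : ‖xstar - y‖ ^ 2 = t ^ 2 := by
      rw [hxy, norm_neg, norm_smul, EuclideanSpace.norm_single]
      simp [abs_of_pos ht]
    rw [e1, e2] at h1
    linarith
  have hlip_comp : ∀ (y : EuclideanSpace ℝ (Fin n)) i,
      |f' xstar i - f' y i| ≤ L * ‖xstar - y‖ := by
    intro y i
    calc |f' xstar i - f' y i| = |(f' xstar - f' y) i| := rfl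
      _ ≤ ‖f' xstar - f' y‖ := habs _ i
      _ ≤ L * ‖xstar - y‖ := hlip _ _
  -- KKT: gradient nonneg
  have hgpos : ∀ i, 0 ≤ f' xstar i := by
    intro i
    by_contra hcon
    push_neg at hcon
    set t := -(f' xstar i) / (2 * L) with htdef
    have ht : 0 < t := by
      rw [htdef]
      apply div_pos (by linarith) (by linarith)
    set y := xstar + t • EuclideanSpace.single i (1 : ℝ) with hy
    have hyQ : y ∈ Q := by
      rw [hQ]
      intro j
      have : y j = xstar j + t * (if j = i then (1 : ℝ) else 0) := by
        rw [hy]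
        show xstar j + (t • EuclideanSpace.single i (1 : ℝ)) j = _
        rw [show (t • EuclideanSpace.single i (1 : ℝ)) j = t * EuclideanSpace.single i (1 : ℝ) j from rfl,
          EuclideanSpace.single_apply]
      rw [this]
      split
      · have := hxs j; linarith
      · have := hxs j; linarith
    have hxy : xstar - y = -(t • EuclideanSpace.single i (1 : ℝ)) := by rw [hy]; abel
    have h1 := hdir i t ht y hyQ hxy
    have h2 : t * f' y i ≤ t * (f' xstar i + L * t) := by
      apply mul_le_mul_of_nonneg_left _ (le_of_lt ht)
      have h3 := hlip_comp y i
      rw [hxy, norm_neg, norm_smul, EuclideanSpace.norm_single] at h3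
      simp only [Real.norm_eq_abs, abs_of_pos ht, norm_one, mul_one] at h3
      have := abs_le.mp h3
      linarith [this.1, this.2]
    have h4 : f' xstar i + L * t = f' xstar i / 2 := by
      rw [htdef]; field_simp; ring
    rw [h4] at h2
    nlinarith
  -- KKT: complementarity
  have hcomp : ∀ i, 0 < xstar i → f' xstar i ≤ 0 := by
    intro i hxi
    by_contra hcon
    push_neg at hcon
    set t := min (xstar i / 2) (f' xstar i / (2 * L)) with htdef
    have ht : 0 < t := by
      apply lt_min <;> positivity
    set y := xstar - t • EuclideanSpace.single i (1 : ℝ) with hy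
    have hyQ : y ∈ Q := by
      rw [hQ]
      intro j
      have : y j = xstar j - t * (if j = i then (1 : ℝ) else 0) := by
        rw [hy]
        show xstar j - (t • EuclideanSpace.single i (1 : ℝ)) j = _
        rw [show (t • EuclideanSpace.single i (1 : ℝ)) j = t * EuclideanSpace.single i (1 : ℝ) j from rfl,
          EuclideanSpace.single_apply]
      rw [this]
      split
      · rename_i hji
        subst hji
        have h5 : t ≤ xstar j / 2 := min_le_left _ _
        linarith
      · have := hxs j; linarith
    have hxy : xstar - y = -((-t) • EuclideanSpace.single i (1 : ℝ)) := by
      rw [hy, neg_smul]; abel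
    -- use hdir with -t? need 0 < -t false. Direct approach instead:
    have h1 := hsc xstar y
    have h2 := hmin y hyQ
    have hxy2 : xstar - y = t • EuclideanSpace.single i (1 : ℝ) := by rw [hy]; abel
    have e1 : ⟪f' y, xstar - y⟫ = t * f' y i := by
      rw [hxy2, real_inner_smul_right]
      have : ⟪f' y, EuclideanSpace.single i (1 : ℝ)⟫ = f' y i := by
        rw [EuclideanSpace.inner_single_right]; simp
      rw [this]
    have e2 : ‖xstar - y‖ ^ 2 = t ^ 2 := by
      rw [hxy2, norm_smul, EuclideanSpace.norm_single]
      simp [abs_of_pos ht]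
    rw [e1, e2] at h1
    -- t * f' y i ≤ -μ/2 t²  hence f' y i < 0; then f' xstar i ≤ f' y i + L t ≤ L t
    have h3 := hlip_comp y i
    rw [hxy2, norm_smul, EuclideanSpace.norm_single] at h3
    simp only [Real.norm_eq_abs, abs_of_pos ht, norm_one, mul_one] at h3
    have h3' := (abs_le.mp h3).2
    -- f' xstar i ≤ f' y i + L * t
    have h5 : t * f' y i ≤ -(μ / 2) * t ^ 2 := by linarith
    have h6 : f' y i ≤ -(μ / 2) * t := by
      by_contra h7
      push_neg at h7
      nlinarith
    have hmt : 0 ≤ μ / 2 * t := by positivity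
    have h8 : f' xstar i ≤ L * t := by linarith
    have h9 : t ≤ f' xstar i / (2 * L) := min_le_right _ _
    have h10 : L * t ≤ f' xstar i / 2 := by
      calc L * t ≤ L * (f' xstar i / (2 * L)) := by
            apply mul_le_mul_of_nonneg_left h9 (le_of_lt hL)
        _ = f' xstar i / 2 := by field_simp
    linarith
  -- fixed point
  have hfix : P (xstar - (1 / L) • f' xstar) = xstar := by
    ext i
    rw [hP]
    have e1 : (xstar - (1 / L) • f' xstar) i = xstar i - (1 / L) * f' xstar i := rfl
    rw [e1]
    rcases eq_or_lt_of_le (hxs i) with h | h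
    · rw [← h]
      rw [max_eq_right]
      have := hgpos i
      have h2 : 0 ≤ 1 / L * f' xstar i := by positivity
      linarith
    · have hg0 : f' xstar i = 0 := le_antisymm (hcomp i h) (hgpos i)
      rw [hg0]
      simp
      exact le_of_lt h
  -- main step
  have step : ∀ k : ℕ, ‖x (k + 1) - xstar‖ ^ 2 ≤ (1 - μ / L) * ‖x k - xstar‖ ^ 2 := by
    intro k
    have h1 : ‖x (k + 1) - xstar‖ ^ 2 ≤
        ‖(x k - (1 / L) • f' (x k)) - (xstar - (1 / L) • f' xstar)‖ ^ 2 := by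
      have h2 := hPn (x k - (1 / L) • f' (x k)) (xstar - (1 / L) • f' xstar)
      rw [hfix] at h2
      rw [hiter k]
      exact h2
    set Δx := x k - xstar with hΔx
    set Δg := f' (x k) - f' xstar with hΔg
    have hexp : (x k - (1 / L) • f' (x k)) - (xstar - (1 / L) • f' xstar)
        = Δx - (1 / L) • Δg := by
      rw [hΔx, hΔg, smul_sub]; abel
    rw [hexp] at h1
    have hsq : ‖Δx - (1 / L) • Δg‖ ^ 2
        = ‖Δx‖ ^ 2 - 2 * ((1 / L) * ⟪Δg, Δx⟫) + (1 / L) ^ 2 * ‖Δg‖ ^ 2 := by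
      rw [norm_sub_sq_real, real_inner_smul_right, norm_smul, Real.norm_eq_abs,
        abs_of_pos (by positivity : (0:ℝ) < 1 / L), real_inner_comm]
      ring
    rw [hsq] at h1
    have hm := hmono (x k) xstar
    have hc := hco (x k) xstar
    rw [← hΔx, ← hΔg] at hm hc
    have hinv : 0 < 1 / L := by positivity
    have h5 : (1 / L) ^ 2 * ‖Δg‖ ^ 2 ≤ (1 / L) * ⟪Δg, Δx⟫ := by
      have := mul_le_mul_of_nonneg_left hc (le_of_lt hinv)
      calc (1 / L) ^ 2 * ‖Δg‖ ^ 2 = (1 / L) * ((1 / L) * ‖Δg‖ ^ 2) := by ring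
        _ ≤ (1 / L) * ⟪Δg, Δx⟫ := this
    have h6 : (1 / L) * (μ * ‖Δx‖ ^ 2) ≤ (1 / L) * ⟪Δg, Δx⟫ :=
      mul_le_mul_of_nonneg_left hm (le_of_lt hinv)
    have h7 : (1 - μ / L) * ‖Δx‖ ^ 2 = ‖Δx‖ ^ 2 - (1 / L) * (μ * ‖Δx‖ ^ 2) := by
      field_simp
    linarith
  intro k
  induction k with
  | zero => simp
  | succ k ih =>
    have hfac : 0 ≤ 1 - μ / L := by
      have : μ / L ≤ 1 := (div_le_one hL).mpr hμL
      linarith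
    calc ‖x (k + 1) - xstar‖ ^ 2 ≤ (1 - μ / L) * ‖x k - xstar‖ ^ 2 := step k
      _ ≤ (1 - μ / L) * ((1 - μ / L) ^ k * ‖x 0 - xstar‖ ^ 2) :=
          mul_le_mul_of_nonneg_left ih hfac
      _ = (1 - μ / L) ^ (k + 1) * ‖x 0 - xstar‖ ^ 2 := by ring
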